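/- Fix sets X, Y and a partial function a : Y ⇀ X, and let f : X ⇀ Y. Then f is a regular element of the sandwich semigroup PT_XY^a, i.e., there exists g : X ⇀ Y with f = f⬝a⬝g⬝a⬝f, if and only if all three of the following hold: (1) ran(f) ⊆ dom(a); (2) a is injective on ran(f) (for all y, z ∈ ran(f), a(y) = a(z) implies y = z); and (3) every ker(f)-class meets ran(a) (for every x ∈ dom(f) there exists y ∈ ran(a) with y ∈ dom(f) and f(y) = f(x)). Thus Reg(PT_XY^a) = P₁ᵃ ∩ P₂ᵃ. -/

import Mathlib

theorem PFun_mem_bind_iff' {α β : Type*} {o : Part α} {g : α →. β} {b : β} :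
    b ∈ o.bind g ↔ ∃ a ∈ o, b ∈ g a := Part.mem_bind_iff

theorem PFun_comp_apply' {α β γ : Type*} (f : β → Part γ) (g : α →. β) (a : α) :
    PFun.comp f g a = (g a).bind f := rfl

/-- Fix `a : Y ⇀ X` and `f : X ⇀ Y`.  Then `f` is a regular element of the
sandwich semigroup `PT_XY^a`, i.e. `f = f⬝a⬝g⬝a⬝f` for some `g : X ⇀ Y`, iff
(1) `ran f ⊆ dom a`; (2) `a` is injective on `ran f`; and (3) every `ker f`-class meets
`ran a`.  Thus `Reg(PT_XY^a) = P₁ᵃ ∩ P₂ᵃ`. -/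
theorem regular_iff_PT {X Y : Type*} (a : Y →. X) (f : X →. Y) :
    (∃ g : X →. Y, f = f.comp (a.comp (g.comp (a.comp f)))) ↔
      (f.ran ⊆ a.Dom ∧
        (∀ y ∈ f.ran, ∀ z ∈ f.ran, a y = a z → y = z) ∧
        (∀ x ∈ f.Dom, ∃ y ∈ a.ran, y ∈ f.Dom ∧ f y = f x)) := by
  classical
  constructor
  · rintro ⟨g, hg⟩
    -- unfold the statement "y ∈ f x ↔ chain membership"
    have key : ∀ x y, y ∈ f x ↔
        ∃ y₀, y₀ ∈ f x ∧ ∃ u, u ∈ a y₀ ∧ ∃ t, t ∈ g u ∧ ∃ c, c ∈ a t ∧ y ∈ f c := by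
      intro x y
      conv_lhs => rw [hg]
      simp only [PFun.comp_apply, Part.mem_bind_iff, PFun_mem_bind_iff']
      constructor
      · rintro ⟨c, ⟨t, ⟨u, ⟨y₀, hy₀, hu⟩, ht⟩, hc⟩, hy⟩
        exact ⟨y₀, hy₀, u, hu, t, ht, c, hc, hy⟩
      · rintro ⟨y₀, hy₀, u, hu, t, ht, c, hc, hy⟩
        exact ⟨c, ⟨t, ⟨u, ⟨y₀, hy₀, hu⟩, ht⟩, hc⟩, hy⟩
    refine ⟨?_, ?_, ?_⟩
    · rintro y ⟨x, hx⟩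
      obtain ⟨y₀, hy₀, u, hu, -⟩ := (key x y).mp hx
      cases Part.mem_unique hx hy₀
      exact Part.dom_iff_mem.mpr ⟨u, hu⟩
    · rintro y ⟨x, hx⟩ z ⟨x', hx'⟩ hyz
      obtain ⟨y₀, hy₀, u, hu, t, ht, c, hc, hy⟩ := (key x y).mp hx
      cases Part.mem_unique hx hy₀
      obtain ⟨z₀, hz₀, u', hu', t', ht', c', hc', hz⟩ := (key x' z).mp hx'
      cases Part.mem_unique hx' hz₀
      have hu2 : u ∈ a z := hyz ▸ hu
      cases Part.mem_unique hu2 hu'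
      cases Part.mem_unique ht ht'
      cases Part.mem_unique hc hc'
      exact Part.mem_unique hy hz
    · intro x hx
      obtain ⟨y, hy⟩ := (PFun.mem_dom f x).mp hx
      obtain ⟨y₀, hy₀, u, hu, t, ht, c, hc, hyc⟩ := (key x y).mp hy
      refine ⟨c, ⟨t, hc⟩, (PFun.mem_dom f c).mpr ⟨y, hyc⟩, ?_⟩
      rw [Part.eq_some_iff.mpr hyc, Part.eq_some_iff.mpr hy]
  · rintro ⟨h1, h2, h3⟩
    choose r hr1 hr2 hr3 using h3
    choose t ht using hr1
    set P : X → Prop := fun u => ∃ x, x ∈ f.Dom ∧ u ∈ (f x).bind a with hP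
    have hPex : ∀ u, P u → ∃ x, x ∈ f.Dom ∧ u ∈ (f x).bind a := fun _ h => h
    choose w hw1 hw2 using hPex
    refine ⟨fun u => if h : P u then Part.some (t (w u h) (hw1 u h)) else Part.none, ?_⟩
    apply PFun.ext
    intro x y
    simp only [PFun.comp_apply, PFun_comp_apply', Part.mem_bind_iff, PFun_mem_bind_iff']
    constructor
    · intro hy
      have hx : x ∈ f.Dom := (PFun.mem_dom f x).mpr ⟨y, hy⟩
      have hyran : y ∈ f.ran := ⟨x, hy⟩
      have hadom : (a y).Dom := h1 hyran
      set u := (a y).get hadom with hu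
      have hua : u ∈ a y := Part.get_mem hadom
      have hPu : P u := ⟨x, hx, Part.mem_bind_iff.mpr ⟨y, hy, hua⟩⟩
      set x' := w u hPu with hx'def
      have hx' : x' ∈ f.Dom := hw1 u hPu
      obtain ⟨y', hy', hu'⟩ := Part.mem_bind_iff.mp (hw2 u hPu)
      have hy'ran : y' ∈ f.ran := ⟨x', hy'⟩
      have : y' = y := h2 y' hy'ran y hyran (by
        rw [Part.eq_some_iff.mpr hu', Part.eq_some_iff.mpr hua])
      rw [this] at hy'
      have hyr : y ∈ f (r x' hx') := by rw [hr3 x' hx']; exact hy'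
      refine ⟨r x' hx', ⟨t x' hx', ⟨u, ⟨y, hy, hua⟩, ?_⟩, ht x' hx'⟩, hyr⟩
      rw [dif_pos hPu]
      exact Part.mem_some _
    · rintro ⟨c, ⟨t₀, ⟨u, ⟨y₀, hy₀, hu⟩, ht₀⟩, hc⟩, hy⟩
      have hx : x ∈ f.Dom := (PFun.mem_dom f x).mpr ⟨y₀, hy₀⟩
      have hPu : P u := ⟨x, hx, Part.mem_bind_iff.mpr ⟨y₀, hy₀, hu⟩⟩
      rw [dif_pos hPu] at ht₀
      cases Part.mem_unique ht₀ (Part.mem_some _)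
      set x' := w u hPu with hx'def
      have hx' : x' ∈ f.Dom := hw1 u hPu
      obtain ⟨y', hy', hu'⟩ := Part.mem_bind_iff.mp (hw2 u hPu)
      cases Part.mem_unique hc (ht x' hx')
      have hy'' : y ∈ f x' := by rw [← hr3 x' hx']; exact hy
      have : y₀ = y' := h2 y₀ ⟨x, hy₀⟩ y' ⟨x', hy'⟩ (by
        rw [Part.eq_some_iff.mpr hu, Part.eq_some_iff.mpr hu'])
      subst this
      cases Part.mem_unique hy'' hy'
      exact hy₀
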